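/- Let G be a finite non-abelian group. Then κ(G) = 7/(4|G|) if and only if the centre Z(G) has index 4 in G. -/

import Mathlib

noncomputable def kappa (G : Type*) [Group G] : ℝ :=
  (Nat.card {p : G × G // IsConj p.1 p.2} : ℝ) / (Nat.card G : ℝ) ^ 2

namespace KappaAux

open Subgroup MulAction Finset

attribute [local instance] Classical.propDecidable

variable {G : Type*} [Group G] [Fintype G]

omit [Fintype G] in
lemma index_one_iff (g : G) : (centralizer {g} : Subgroup G).index = 1 ↔ g ∈ center G := by
  rw [Subgroup.index_eq_one, Subgroup.centralizer_eq_top_iff_subset, Set.singleton_subset_iff]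
  rfl

lemma conj_card (g : G) : Nat.card {h : G // IsConj g h} = (centralizer {g} : Subgroup G).index := by
  have e1 : {h : G // IsConj g h} ≃ orbit (ConjAct G) g :=
    Equiv.subtypeEquivRight (fun h => by
      rw [ConjAct.mem_orbit_conjAct]; exact isConj_comm)
  have horb : Nat.card {h : G // IsConj g h} * Nat.card (stabilizer (ConjAct G) g)
      = Nat.card G := by
    rw [Nat.card_congr e1]
    simp only [Nat.card_eq_fintype_card]
    exact MulAction.card_orbit_mul_card_stabilizer_eq_card_group (ConjAct G) g
  have hcent : (centralizer {g} : Subgroup G).index * Nat.card (stabilizer (ConjAct G) g)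
      = Nat.card G := by
    rw [← Subgroup.nat_card_centralizer_nat_card_stabilizer]
    exact Subgroup.index_mul_card _
  exact Nat.eq_of_mul_eq_mul_right Nat.card_pos (horb.trans hcent.symm)

lemma pairs_card : Nat.card {p : G × G // IsConj p.1 p.2}
    = ∑ g : G, (centralizer {g} : Subgroup G).index := by
  rw [Nat.card_congr (Equiv.subtypeProdEquivSigmaSubtype (fun a b : G => IsConj a b)),
    Nat.card_eq_fintype_card, Fintype.card_sigma]
  congr 1; ext g
  rw [← Nat.card_eq_fintype_card, conj_card]

omit [Fintype G] in
lemma not_cyclic_quot (hna : ∃ a b : G, a * b ≠ b * a) : ¬ IsCyclic (G ⧸ center G) := by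
  intro h
  obtain ⟨a, b, hab⟩ := hna
  exact hab (commutative_of_cyclic_center_quotient (QuotientGroup.mk' (center G))
    (by rw [QuotientGroup.ker_mk']) a b)

omit [Fintype G] in
lemma index_ne_small (hna : ∃ a b : G, a * b ≠ b * a) :
    (center G).index ≠ 1 ∧ (center G).index ≠ 2 ∧ (center G).index ≠ 3 := by
  have hq : (center G).index = Nat.card (G ⧸ center G) := rfl
  have hcyc := not_cyclic_quot hna
  refine ⟨?_, ?_, ?_⟩ <;> intro h
  · exact hcyc (by
      have h1 : Nat.card (G ⧸ center G) = 1 := by rw [← hq, h]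
      have := (Nat.card_eq_one_iff_unique.mp h1).1
      infer_instance)
  · exact hcyc (isCyclic_of_prime_card (p := 2) (by rw [← hq, h]))
  · exact hcyc (isCyclic_of_prime_card (p := 3) (by rw [← hq, h]))

omit [Fintype G] in
lemma cent_index_two (h4 : (center G).index = 4) {g : G} (hg : g ∉ center G) :
    (centralizer {g} : Subgroup G).index = 2 := by
  have hle : center G ≤ centralizer {g} := Subgroup.center_le_centralizer {g}
  have hmul := Subgroup.relIndex_mul_index hle
  rw [h4] at hmul
  have hne1 : (centralizer {g} : Subgroup G).index ≠ 1 := fun h => hg ((index_one_iff g).mp h)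
  have hrne1 : (center G).relIndex (centralizer {g}) ≠ 1 := by
    intro h
    exact hg (Subgroup.relIndex_eq_one.mp h (Subgroup.mem_centralizer_iff.mpr (by simp)))
  have hdvd : (centralizer {g} : Subgroup G).index ∣ 4 := Dvd.intro_left _ hmul
  have hle4 : (centralizer {g} : Subgroup G).index ≤ 4 := Nat.le_of_dvd (by norm_num) hdvd
  interval_cases h : (centralizer {g} : Subgroup G).index <;> omega

lemma sum_split (f : G → ℕ) (hf : ∀ g ∈ center G, f g = 1) :
    ∑ g : G, f g = Nat.card (center G) +
      ∑ g ∈ univ.filter (fun g => g ∉ center G), f g := by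
  rw [← Finset.sum_filter_add_sum_filter_not univ (fun g => g ∈ center G) f]
  congr 1
  rw [Finset.sum_congr rfl (fun g hg => hf g (Finset.mem_filter.mp hg).2), Finset.sum_const,
    smul_eq_mul, mul_one, Nat.card_eq_fintype_card, Fintype.card_subtype]

lemma card_not_center :
    (univ.filter (fun g : G => g ∉ center G)).card = Nat.card G - Nat.card (center G) := by
  have h := Finset.card_filter_add_card_filter_not (s := (univ : Finset G))
    (p := fun g : G => g ∈ center G)
  have hz : (univ.filter (fun g : G => g ∈ center G)).card = Nat.card (center G) := by
    rw [Nat.card_eq_fintype_card, Fintype.card_subtype]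
  have hN : (univ : Finset G).card = Nat.card G := by
    rw [Nat.card_eq_fintype_card, Finset.card_univ]
  omega

lemma sum_eq_of_index_four (h4 : (center G).index = 4) :
    ∑ g : G, (centralizer {g} : Subgroup G).index = 7 * Nat.card (center G) ∧
    Nat.card G = 4 * Nat.card (center G) := by
  have hN : (center G).index * Nat.card (center G) = Nat.card G := Subgroup.index_mul_card _
  rw [h4] at hN
  constructor
  · rw [sum_split _ (fun g hg => (index_one_iff g).mpr hg),
      Finset.sum_congr rfl (fun g hg => cent_index_two h4 (Finset.mem_filter.mp hg).2),
      Finset.sum_const, smul_eq_mul, card_not_center]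
    have hzpos : 0 < Nat.card (center G) := Nat.card_pos
    omega
  · omega

lemma sum_ge :
    ∑ g : G, (centralizer {g} : Subgroup G).index ≥
      Nat.card (center G) + 2 * (Nat.card G - Nat.card (center G)) := by
  rw [sum_split _ (fun g hg => (index_one_iff g).mpr hg)]
  have h2 : ∀ g ∈ univ.filter (fun g : G => g ∉ center G),
      2 ≤ (centralizer {g} : Subgroup G).index := by
    intro g hg
    have hg' := (Finset.mem_filter.mp hg).2
    have hne1 : (centralizer {g} : Subgroup G).index ≠ 1 := fun h => hg' ((index_one_iff g).mp h)
    have hne0 : (centralizer {g} : Subgroup G).index ≠ 0 :=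
      Subgroup.index_ne_zero_of_finite
    omega
  have := Finset.sum_le_sum h2
  rw [Finset.sum_const, smul_eq_mul, card_not_center] at this
  omega

end KappaAux

theorem kappa_eq_seven_quarters_iff_center_index_four (G : Type*) [Group G] [Fintype G]
    (hna : ∃ a b : G, a * b ≠ b * a) :
    kappa G = 7 / (4 * (Nat.card G : ℝ)) ↔ (Subgroup.center G).index = 4 := by
  classical
  set N := Nat.card G with hNdef
  set z := Nat.card (Subgroup.center G) with hzdef
  have hNpos : 0 < N := Nat.card_pos
  have hzpos : 0 < z := Nat.card_pos
  have hP : Nat.card {p : G × G // IsConj p.1 p.2}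
      = ∑ g : G, (Subgroup.centralizer {g} : Subgroup G).index := KappaAux.pairs_card
  constructor
  · intro hk
    -- turn the real equation into a Nat equation 4 * P = 7 * N
    have hNne : (N : ℝ) ≠ 0 := by positivity
    have hreal : 4 * (Nat.card {p : G × G // IsConj p.1 p.2} : ℝ) = 7 * (N : ℝ) := by
      rw [kappa, ← hNdef] at hk
      rw [div_eq_div_iff (by positivity) (by positivity)] at hk
      refine mul_right_cancel₀ hNne ?_
      linear_combination hk
    have hnat : 4 * Nat.card {p : G × G // IsConj p.1 p.2} = 7 * N := by
      exact_mod_cast hreal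
    rw [hP] at hnat
    have hge := KappaAux.sum_ge (G := G)
    have hidx : (Subgroup.center G).index * z = N := Subgroup.index_mul_card _
    have hzN : z ≤ N := by
      calc z ≤ (Subgroup.center G).index * z :=
        Nat.le_mul_of_pos_left z (Nat.pos_of_ne_zero Subgroup.index_ne_zero_of_finite)
      _ = N := hidx
    have h4z : N ≤ 4 * z := by omega
    have hle4 : (Subgroup.center G).index ≤ 4 := by
      have : (Subgroup.center G).index * z ≤ 4 * z := by omega
      exact Nat.le_of_mul_le_mul_right this hzpos
    have hne0 : (Subgroup.center G).index ≠ 0 := Subgroup.index_ne_zero_of_finite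
    obtain ⟨h1, h2, h3⟩ := KappaAux.index_ne_small hna
    omega
  · intro h4
    obtain ⟨hsum, hN4⟩ := KappaAux.sum_eq_of_index_four h4
    have hN4' : N = 4 * z := hN4
    rw [kappa, hP, hsum, ← hzdef, ← hNdef, hN4']
    have hzne : (z : ℝ) ≠ 0 := by positivity
    push_cast
    field_simp
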